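/- If a sequence w ∈ {1,2}^ℕ is not balanced, then for each letter a ∈ {1,2} the sequence σ₁(aw) is not balanced, where σ₁ is the Sturmian substitution defined by σ₁(1) = 1, σ₁(2) = 21. -/

import Mathlib

/-- The word `v` occurs in the sequence `w` at position `k`. -/
def occursAt (w : ℕ → Fin 2) (v : List (Fin 2)) (k : ℕ) : Prop :=
  ∀ i < v.length, v.getD i 0 = w (k + i)

/-- Balance of a sequence over two letters. -/
def IsBalancedSeq (w : ℕ → Fin 2) : Prop :=
  ∀ u v : List (Fin 2), (∃ k, occursAt w u k) → (∃ k, occursAt w v k) →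
    u.length = v.length → |(u.count 0 : ℤ) - (v.count 0 : ℤ)| ≤ 1

/-- The Sturmian substitution `σ₁ : 1 ↦ 1, 2 ↦ 21` (letters `1, 2` are `0, 1 : Fin 2`). -/
def sturmSub1 (a : Fin 2) : List (Fin 2) := if a = 0 then [0] else [1, 0]

/-- The image of an infinite sequence under a (nonerasing) substitution:
the `n`-th letter of the concatenation `s (u 0) s (u 1) s (u 2) ⋯`. -/
def subApply (s : Fin 2 → List (Fin 2)) (u : ℕ → Fin 2) (n : ℕ) : Fin 2 :=
  (((List.range (n + 1)).map u).flatMap s).getD n 0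

/-- Prepend a letter to an infinite sequence. -/
def prepend (a : Fin 2) (w : ℕ → Fin 2) : ℕ → Fin 2 :=
  fun n => match n with
  | 0 => a
  | m + 1 => w m

/-! ### Auxiliary lemmas -/

lemma fin2_cases (x : Fin 2) : x = 0 ∨ x = 1 := by
  fin_cases x <;> simp

lemma occursAt_tail {w : ℕ → Fin 2} {x : Fin 2} {t : List (Fin 2)} {k : ℕ}
    (h : occursAt w (x :: t) k) : occursAt w t (k + 1) := by
  intro i hi
  have := h (i + 1) (by simpa using Nat.succ_lt_succ hi)
  simpa [Nat.add_assoc, Nat.add_comm 1 i] using this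

lemma occursAt_head {w : ℕ → Fin 2} {x : Fin 2} {t : List (Fin 2)} {k : ℕ}
    (h : occursAt w (x :: t) k) : x = w k := by
  simpa using h 0 (by simp)

lemma occursAt_take {w : ℕ → Fin 2} {v : List (Fin 2)} {k : ℕ} (m : ℕ)
    (h : occursAt w v k) : occursAt w (v.take m) k := by
  intro i hi
  have hi' : i < v.length := lt_of_lt_of_le hi (by simp [List.length_take])
  have him : i < m := lt_of_lt_of_le hi (by simp [List.length_take])
  rw [List.getD_eq_getElem _ _ hi, List.getElem_take]
  rw [← List.getD_eq_getElem _ _ hi']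
  exact h i hi'

lemma occursAt_prepend {w : ℕ → Fin 2} {v : List (Fin 2)} {k : ℕ} (a : Fin 2)
    (h : occursAt w v k) : occursAt (prepend a w) v (k + 1) := by
  intro i hi
  have := h i hi
  simpa [prepend, Nat.add_right_comm k 1 i] using this

/-- Partial image words. -/
def Lk (u : ℕ → Fin 2) (n : ℕ) : List (Fin 2) :=
  ((List.range n).map u).flatMap sturmSub1

lemma Lk_succ (u : ℕ → Fin 2) (n : ℕ) :
    Lk u (n + 1) = Lk u n ++ sturmSub1 (u n) := by
  simp [Lk, List.range_succ]

lemma sturm_len_pos (x : Fin 2) : 0 < (sturmSub1 x).length := by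
  rcases fin2_cases x with h | h <;> simp [h, sturmSub1]

lemma Lk_len (u : ℕ → Fin 2) (n : ℕ) : n ≤ (Lk u n).length := by
  induction n with
  | zero => simp [Lk]
  | succ n ih =>
    rw [Lk_succ, List.length_append]
    have := sturm_len_pos (u n)
    omega

lemma Lk_len_mono (u : ℕ → Fin 2) {n m : ℕ} (h : n ≤ m) :
    (Lk u n).length ≤ (Lk u m).length := by
  induction m with
  | zero =>
    have : n = 0 := by omega
    subst this; exact le_refl _
  | succ m ih =>
    rcases Nat.lt_or_ge n (m + 1) with h' | h'
    · have := ih (by omega)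
      rw [Lk_succ, List.length_append]
      omega
    · have : n = m + 1 := by omega
      subst this; exact le_refl _

lemma Lk_getD_stable (u : ℕ → Fin 2) {n m m' : ℕ} (hmm : m ≤ m')
    (hn : n < (Lk u m).length) :
    (Lk u m').getD n 0 = (Lk u m).getD n 0 := by
  induction m' with
  | zero =>
    have : m = 0 := by omega
    subst this; rfl
  | succ m' ih =>
    rcases Nat.lt_or_ge m (m' + 1) with h' | h'
    · have h2 : n < (Lk u m').length := lt_of_lt_of_le hn (Lk_len_mono u (by omega))
      rw [Lk_succ, List.getD_append _ _ _ _ h2, ih (by omega)]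
    · have : m = m' + 1 := by omega
      subst this; rfl

lemma subApply_eq (u : ℕ → Fin 2) {n m : ℕ} (h : n + 1 ≤ (Lk u m).length) :
    subApply sturmSub1 u n = (Lk u m).getD n 0 := by
  have hdef : subApply sturmSub1 u n = (Lk u (n + 1)).getD n 0 := rfl
  rcases Nat.le_total (n + 1) m with hc | hc
  · rw [hdef, Lk_getD_stable u hc (lt_of_lt_of_le (Nat.lt_succ_self n) (Lk_len u (n + 1)))]
  · rw [hdef, Lk_getD_stable u hc (by omega)]

lemma Lk_occ (u : ℕ → Fin 2) (v : List (Fin 2)) (k : ℕ) (h : occursAt u v k) :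
    Lk u (k + v.length) = Lk u k ++ v.flatMap sturmSub1 := by
  induction v generalizing k with
  | nil => simp
  | cons x t ih =>
    have hx : x = u k := occursAt_head h
    have ht : occursAt u t (k + 1) := occursAt_tail h
    have h1 : k + (x :: t).length = (k + 1) + t.length := by simp; omega
    rw [h1, ih (k + 1) ht, Lk_succ, hx]
    simp [List.append_assoc]

lemma occ_image (u : ℕ → Fin 2) (v : List (Fin 2)) (k : ℕ) (h : occursAt u v k) :
    occursAt (subApply sturmSub1 u) (v.flatMap sturmSub1) (Lk u k).length := by
  intro i hi
  have hlen : (Lk u (k + v.length)).length = (Lk u k).length + (v.flatMap sturmSub1).length := by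
    rw [Lk_occ u v k h, List.length_append]
  have hm : ((Lk u k).length + i) + 1 ≤ (Lk u (k + v.length)).length := by omega
  rw [subApply_eq u hm, Lk_occ u v k h,
    List.getD_append_right _ _ _ _ (Nat.le_add_right _ _), Nat.add_sub_cancel_left]

lemma flatMap_last (v : List (Fin 2)) (hv : v ≠ []) :
    ∃ D, v.flatMap sturmSub1 = D ++ [0] := by
  induction v with
  | nil => exact absurd rfl hv
  | cons x t ih =>
    cases t with
    | nil =>
      rcases fin2_cases x with h | h
      · exact ⟨[], by simp [h, sturmSub1]⟩
      · exact ⟨[1], by simp [h, sturmSub1]⟩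
    | cons y r =>
      obtain ⟨D, hD⟩ := ih (by simp)
      exact ⟨sturmSub1 x ++ D, by simp [hD]⟩

lemma occ_image0 (u : ℕ → Fin 2) (v : List (Fin 2)) (k : ℕ) (h : occursAt u v k)
    (hk : 1 ≤ k) :
    occursAt (subApply sturmSub1 u) (0 :: v.flatMap sturmSub1) ((Lk u k).length - 1) := by
  have hlen1 : 1 ≤ (Lk u k).length := le_trans hk (Lk_len u k)
  have hlast : subApply sturmSub1 u ((Lk u k).length - 1) = 0 := by
    have hne : ((List.range k).map u) ≠ [] := by
      simp [List.map_eq_nil_iff, List.range_eq_nil]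
      omega
    obtain ⟨D, hD⟩ : ∃ D, Lk u k = D ++ [0] := flatMap_last _ hne
    have hDlen : (Lk u k).length - 1 = D.length := by rw [hD]; simp
    rw [subApply_eq u (m := k) (by omega), hDlen, hD,
      List.getD_append_right _ _ _ _ (le_refl _)]
    simp
  intro i hi
  cases i with
  | zero => simpa using hlast.symm
  | succ j =>
    have hj : j < (v.flatMap sturmSub1).length := by simpa using hi
    have := occ_image u v k h j hj
    have harith : (Lk u k).length - 1 + (j + 1) = (Lk u k).length + j := by omega
    rw [harith]
    simpa using this

lemma count0_flatMap (v : List (Fin 2)) : (v.flatMap sturmSub1).count 0 = v.length := by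
  induction v with
  | nil => simp
  | cons x t ih =>
    rcases fin2_cases x with h | h <;>
      simp [h, sturmSub1, List.count_append, ih, List.count_cons]

lemma len_flatMap (v : List (Fin 2)) :
    (v.flatMap sturmSub1).length = v.length + v.count 1 := by
  induction v with
  | nil => simp
  | cons x t ih =>
    rcases fin2_cases x with h | h <;>
      simp [h, sturmSub1, ih, List.count_cons] <;> omega

lemma count_fin2 (l : List (Fin 2)) : l.count 0 + l.count 1 = l.length := by
  induction l with
  | nil => simp
  | cons x t ih =>
    rcases fin2_cases x with h | h <;> simp [h, List.count_cons] <;> omega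

lemma count_take_succ (l : List (Fin 2)) (m : ℕ) :
    (l.take m).count 0 ≤ (l.take (m + 1)).count 0 ∧
      (l.take (m + 1)).count 0 ≤ (l.take m).count 0 + 1 := by
  rw [List.take_succ, List.count_append]
  have h1 : (l[m]?.toList).count 0 ≤ (l[m]?.toList).length := List.count_le_length
  have h2 : (l[m]?.toList).length ≤ 1 := by cases l[m]? <;> simp
  omega

lemma ivt (u v : List (Fin 2)) (h : v.count 0 + 2 ≤ u.count 0) :
    ∃ m, (u.take m).count 0 = (v.take m).count 0 + 2 := by
  by_contra hno
  push_neg at hno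
  have key : ∀ m, (u.take m).count 0 ≤ (v.take m).count 0 + 1 := by
    intro m
    induction m with
    | zero => simp
    | succ m ih =>
      have hu := count_take_succ u m
      have hv := count_take_succ v m
      have := hno (m + 1)
      omega
  have h1 := key u.length
  rw [List.take_length] at h1
  have h2 : (v.take u.length).count 0 ≤ v.count 0 :=
    (List.take_sublist _ _).count_le _
  omega

lemma core2 (w : ℕ → Fin 2) (a : Fin 2)
    (hb : IsBalancedSeq (subApply sturmSub1 (prepend a w)))
    (u v : List (Fin 2)) (ku kv : ℕ) (hu : occursAt w u ku) (hv : occursAt w v kv)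
    (hlen : u.length = v.length) (hcnt : u.count 0 = v.count 0 + 2) : False := by
  have hc2 : 2 ≤ u.count 0 := by omega
  have hul2 : 2 ≤ u.length := le_trans hc2 (List.count_le_length)
  have hvne : v ≠ [] := by
    intro hnil
    rw [hnil, List.length_nil] at hlen
    omega
  set W := prepend a w with hW
  have huW : occursAt W u (ku + 1) := occursAt_prepend a hu
  have hvW : occursAt W v (kv + 1) := occursAt_prepend a hv
  -- the factor X = 0 :: σ(u)
  have hX := occ_image0 W u (ku + 1) huW (by omega)
  -- the factor Y = σ(v) minus its final 0
  obtain ⟨D, hD⟩ := flatMap_last v hvne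
  have hYocc : occursAt (subApply sturmSub1 W) D (Lk W (kv + 1)).length := by
    have h1 := occursAt_take D.length (occ_image W v (kv + 1) hvW)
    rwa [hD, List.take_left] at h1
  -- counts and lengths
  have hDlen : D.length + 1 = v.length + v.count 1 := by
    have := len_flatMap v
    rw [hD] at this
    simpa using this
  have hDcount : D.count 0 + 1 = v.length := by
    have := count0_flatMap v
    rw [hD, List.count_append] at this
    simpa using this
  have hXlen : (0 :: u.flatMap sturmSub1).length = 1 + u.length + u.count 1 := by
    rw [List.length_cons, len_flatMap]
    omega
  have hXcount : (0 :: u.flatMap sturmSub1).count 0 = u.length + 1 := by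
    simp [List.count_cons, count0_flatMap]
  have hcfu := count_fin2 u
  have hcfv := count_fin2 v
  have hlenXY : (0 :: u.flatMap sturmSub1).length = D.length := by omega
  have hbal := hb (0 :: u.flatMap sturmSub1) D ⟨_, hX⟩ ⟨_, hYocc⟩ hlenXY
  have hYc : D.count 0 = u.length - 1 := by omega
  rw [hXcount, hYc] at hbal
  have hcast : ((u.length + 1 : ℕ) : ℤ) - ((u.length - 1 : ℕ) : ℤ) = 2 := by
    have h1 : 1 ≤ u.length := by omega
    push_cast [h1]
    ring
  rw [hcast] at hbal
  norm_num at hbal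

lemma core (w : ℕ → Fin 2) (a : Fin 2)
    (hb : IsBalancedSeq (subApply sturmSub1 (prepend a w)))
    (u v : List (Fin 2)) (ku kv : ℕ) (hu : occursAt w u ku) (hv : occursAt w v kv)
    (hlen : u.length = v.length) (hcnt : v.count 0 + 2 ≤ u.count 0) : False := by
  obtain ⟨m, hm⟩ := ivt u v hcnt
  exact core2 w a hb (u.take m) (v.take m) ku kv (occursAt_take m hu) (occursAt_take m hv)
    (by simp [List.length_take, hlen]) hm

/-- If `w` is not balanced then `σ₁(aw)` is not balanced, for each letter `a`. -/
theorem stmt3 (w : ℕ → Fin 2) (hw : ¬ IsBalancedSeq w) (a : Fin 2) :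
    ¬ IsBalancedSeq (subApply sturmSub1 (prepend a w)) := by
  intro hb
  rw [IsBalancedSeq] at hw
  push_neg at hw
  obtain ⟨u, v, ⟨ku, hu⟩, ⟨kv, hv⟩, hlen, hcnt⟩ := hw
  rcases abs_cases ((u.count 0 : ℤ) - (v.count 0 : ℤ)) with ⟨heq, _⟩ | ⟨heq, _⟩
  · have : (v.count 0 : ℤ) + 2 ≤ (u.count 0 : ℤ) := by omega
    exact core w a hb u v ku kv hu hv hlen (by exact_mod_cast this)
  · have : (u.count 0 : ℤ) + 2 ≤ (v.count 0 : ℤ) := by omega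
    exact core w a hb v u kv ku hv hu hlen.symm (by exact_mod_cast this)
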